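/- Let E be a Banach space of ultradistributions with a continuous multiplication module structure over 𝓕L¹_{ν_E} satisfying ‖g·e‖_E ≤ ‖g‖_{𝓕L¹_{ν_E}}‖e‖_E, let η be a weight of class † with η(x+y) ≤ C₁ η(x) e^{A(τ|y|)}, and let χ, ψ ∈ 𝒮^*_†(ℝⁿ)\{0}. Suppose f ∈ E_loc satisfies ‖f‖_{p,ψ,η} := (∫ ‖f T_yψ‖_E^p η(y)^p dy)^{1/p} < ∞ for some 1 ≤ p < ∞, and the function y ↦ ‖ψ̄ T_yχ‖_{𝓕L¹_{ν_E}} e^{A(τ|y|)} is in L^q (q the Hölder conjugate of p) resp. in L¹. Then, using the reproducing identity ‖ψ‖²_{L²} f T_xχ = ∫_{ℝⁿ} f T_xχ T_yψ T_yψ̄ dy (Bochner integral in E), one obtains ‖f‖_{p,χ,η} ≤ ‖ψ‖_{L²}^{−2} ∫_{ℝⁿ} ‖ψ̄ T_yχ‖_{𝓕L¹_{ν_E}} · C₁ e^{A(τ|y|)} dy · ‖f‖_{p,ψ,η}. In particular the norms ‖·‖_{p,χ,η} and ‖·‖_{p,ψ,η} are equivalent, so the amalgam space W(E, L^p_η)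 does not depend on the choice of nonzero window in 𝒮^*_†(ℝⁿ). -/
import Mathlib


open MeasureTheory

/-!
STATEMENT 10.  Abstract formalization.  `D` represents the test space `𝒮^*_†(ℝⁿ)` with
multiplication `mulD`, translations `Ttest`, and complex conjugation represented by the
chosen element `ψbar` (`= ψ̄`); `E` is a Banach module over `𝓕L¹_{ν_E}`, whose norm on
test functions is `N`, with module estimate `‖f(φρ)‖_E ≤ N(ρ)‖fφ‖_E`; `η` is a weight of
class `†` (`η(x+y) ≤ C₁η(x)e^{A(τ|y|)}`); `f ∈ E_loc` is represented by `Λ φ = f·φ`;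
`l2 = ‖ψ‖_{L²}` and `hrepro` is the reproducing identity
`‖ψ‖²_{L²} f T_xχ = ∫ f T_xχ T_yψ T_yψ̄ dy` (Bochner integral in `E`).
Conclusion: `‖f‖_{p,χ,η} ≤ ‖ψ‖_{L²}^{−2} C₁ (∫ ‖ψ̄T_yχ‖_{𝓕L¹_{ν_E}} e^{A(τ|y|)} dy) ‖f‖_{p,ψ,η}`,
which shows that the amalgam space `W(E, L^p_η)` does not depend on the chosen nonzero
window.
-/
theorem stmt_10 (n : ℕ)
    (D : Type*) [AddCommGroup D] [Module ℂ D]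
    (E : Type*) [NormedAddCommGroup E] [NormedSpace ℂ E] [CompleteSpace E]
    (mulD : D →ₗ[ℂ] D →ₗ[ℂ] D)
    (hmulcomm : ∀ a b : D, mulD a b = mulD b a)
    (hmulassoc : ∀ a b c : D, mulD (mulD a b) c = mulD a (mulD b c))
    (Ttest : EuclideanSpace ℝ (Fin n) → D →ₗ[ℂ] D)
    (hTT : ∀ x y : EuclideanSpace ℝ (Fin n), ∀ φ : D,
      Ttest x (Ttest y φ) = Ttest (x + y) φ)
    (hTmul : ∀ x : EuclideanSpace ℝ (Fin n), ∀ φ ψ : D,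
      Ttest x (mulD φ ψ) = mulD (Ttest x φ) (Ttest x ψ))
    (N : D → ℝ) (hN0 : ∀ φ, 0 ≤ N φ)
    (hNT : ∀ x : EuclideanSpace ℝ (Fin n), ∀ φ : D, N (Ttest x φ) = N φ)
    (η : EuclideanSpace ℝ (Fin n) → ℝ) (hηpos : ∀ x, 0 < η x)
    (A : ℝ → ℝ) (C₁ τ : ℝ) (hC₁ : 0 < C₁) (hτ : 0 < τ)
    (hη : ∀ x y : EuclideanSpace ℝ (Fin n), η (x + y) ≤ C₁ * η x * Real.exp (A (τ * ‖y‖)))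
    (χ ψ ψbar : D) (hχ : χ ≠ 0) (hψ : ψ ≠ 0)
    (p : ℝ) (hp : 1 ≤ p)
    (Λ : D →ₗ[ℂ] E)
    (hmod : ∀ φ ρ : D, ‖Λ (mulD φ ρ)‖ ≤ N ρ * ‖Λ φ‖)
    (hFχ : Continuous fun x : EuclideanSpace ℝ (Fin n) => Λ (Ttest x χ))
    (hFψ : Continuous fun y : EuclideanSpace ℝ (Fin n) => Λ (Ttest y ψ))
    (l2 : ℝ) (hl2 : 0 < l2)
    -- Bochner integrability of `y ↦ f T_xχ T_yψ T_yψ̄` and the reproducing identity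
    (hBoch : ∀ x : EuclideanSpace ℝ (Fin n), Integrable fun y : EuclideanSpace ℝ (Fin n) =>
      Λ (mulD (Ttest x χ) (mulD (Ttest y ψ) (Ttest y ψbar))))
    (hrepro : ∀ x : EuclideanSpace ℝ (Fin n),
      l2 ^ 2 • Λ (Ttest x χ) = ∫ y : EuclideanSpace ℝ (Fin n),
        Λ (mulD (Ttest x χ) (mulD (Ttest y ψ) (Ttest y ψbar))))
    -- ‖f‖_{p,ψ,η} < ∞ and the window cross-term is integrable against `e^{A(τ|·|)}`
    (hfin : Integrable fun y : EuclideanSpace ℝ (Fin n) => (‖Λ (Ttest y ψ)‖ * η y) ^ p)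
    (hcross : Integrable fun y : EuclideanSpace ℝ (Fin n) =>
      N (mulD ψbar (Ttest y χ)) * Real.exp (A (τ * ‖y‖))) :
    (∫ x : EuclideanSpace ℝ (Fin n), (‖Λ (Ttest x χ)‖ * η x) ^ p) ^ (1 / p) ≤
      (l2 ^ 2)⁻¹ * C₁ *
        (∫ y : EuclideanSpace ℝ (Fin n),
          N (mulD ψbar (Ttest y χ)) * Real.exp (A (τ * ‖y‖))) *
        (∫ y : EuclideanSpace ℝ (Fin n), (‖Λ (Ttest y ψ)‖ * η y) ^ p) ^ (1 / p) := by
  classical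
  have hp0 : (0:ℝ) < p := lt_of_lt_of_le one_pos hp
  have hp0' : p ≠ 0 := ne_of_gt hp0
  have hbψ : ∀ y, 0 ≤ ‖Λ (Ttest y ψ)‖ * η y := fun y => mul_nonneg (norm_nonneg _) (hηpos y).le
  have hbχ : ∀ x, 0 ≤ ‖Λ (Ttest x χ)‖ * η x := fun x => mul_nonneg (norm_nonneg _) (hηpos x).le
  have hggnn : ∀ z : EuclideanSpace ℝ (Fin n),
      0 ≤ N (mulD ψbar (Ttest z χ)) * Real.exp (A (τ * ‖z‖)) :=
    fun z => mul_nonneg (hN0 _) (Real.exp_nonneg _)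
  have hZnn : 0 ≤ ∫ y : EuclideanSpace ℝ (Fin n),
      N (mulD ψbar (Ttest y χ)) * Real.exp (A (τ * ‖y‖)) := integral_nonneg hggnn
  have hYnn : 0 ≤ ∫ y : EuclideanSpace ℝ (Fin n), (‖Λ (Ttest y ψ)‖ * η y) ^ p :=
    integral_nonneg fun y => Real.rpow_nonneg (hbψ y) p
  have hinv_nn : (0:ℝ) ≤ (l2 ^ 2)⁻¹ := inv_nonneg.2 (pow_nonneg hl2.le 2)
  have hRHSnn : 0 ≤ (l2 ^ 2)⁻¹ * C₁ *
      (∫ y : EuclideanSpace ℝ (Fin n), N (mulD ψbar (Ttest y χ)) * Real.exp (A (τ * ‖y‖))) *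
      (∫ y : EuclideanSpace ℝ (Fin n), (‖Λ (Ttest y ψ)‖ * η y) ^ p) ^ (1 / p) :=
    mul_nonneg (mul_nonneg (mul_nonneg hinv_nn hC₁.le) hZnn) (Real.rpow_nonneg hYnn _)
  by_cases hInt : Integrable (fun x : EuclideanSpace ℝ (Fin n) => (‖Λ (Ttest x χ)‖ * η x) ^ p)
  swap
  · rw [integral_undef hInt, Real.zero_rpow (one_div_ne_zero hp0')]
    exact hRHSnn
  -- ENNReal-valued functions
  set g : EuclideanSpace ℝ (Fin n) → ENNReal :=
    fun z => ENNReal.ofReal (N (mulD ψbar (Ttest z χ)) * Real.exp (A (τ * ‖z‖))) with hgdef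
  set G : EuclideanSpace ℝ (Fin n) → ENNReal :=
    fun y => ENNReal.ofReal (‖Λ (Ttest y ψ)‖ * η y) with hGdef
  set F : EuclideanSpace ℝ (Fin n) → ENNReal :=
    fun x => ENNReal.ofReal (‖Λ (Ttest x χ)‖ * η x) with hFdef
  -- measurability
  have hgg_m : AEMeasurable
      (fun z : EuclideanSpace ℝ (Fin n) => N (mulD ψbar (Ttest z χ)) * Real.exp (A (τ * ‖z‖)))
      volume := hcross.aestronglyMeasurable.aemeasurable
  have hg_m : AEMeasurable g volume := ENNReal.measurable_ofReal.comp_aemeasurable hgg_m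
  have hbψp_m : AEMeasurable
      (fun y : EuclideanSpace ℝ (Fin n) => (‖Λ (Ttest y ψ)‖ * η y) ^ p) volume :=
    hfin.aestronglyMeasurable.aemeasurable
  have hbψ_m : AEMeasurable (fun y : EuclideanSpace ℝ (Fin n) => ‖Λ (Ttest y ψ)‖ * η y) volume := by
    have h2 : AEMeasurable
        (fun y : EuclideanSpace ℝ (Fin n) => ((‖Λ (Ttest y ψ)‖ * η y) ^ p) ^ (p⁻¹ : ℝ))
        volume := hbψp_m.pow aemeasurable_const
    refine h2.congr ?_
    filter_upwards with y
    exact Real.rpow_rpow_inv (hbψ y) hp0'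
  have hG_m : AEMeasurable G volume := ENNReal.measurable_ofReal.comp_aemeasurable hbψ_m
  have hGp_m : AEMeasurable (fun y => G y ^ p) volume := hG_m.pow aemeasurable_const
  -- identification of the ENNReal integrals
  have hIg_eq : ENNReal.ofReal (∫ y : EuclideanSpace ℝ (Fin n),
      N (mulD ψbar (Ttest y χ)) * Real.exp (A (τ * ‖y‖))) = ∫⁻ z, g z :=
    ofReal_integral_eq_lintegral_ofReal hcross (Filter.Eventually.of_forall hggnn)
  have hIg_ne : (∫⁻ z, g z) ≠ ⊤ := by rw [← hIg_eq]; exact ENNReal.ofReal_ne_top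
  have hGp_eq : ∀ y, G y ^ p = ENNReal.ofReal ((‖Λ (Ttest y ψ)‖ * η y) ^ p) := fun y =>
    ENNReal.ofReal_rpow_of_nonneg (hbψ y) hp0.le
  have hIG_eq : ENNReal.ofReal (∫ y : EuclideanSpace ℝ (Fin n), (‖Λ (Ttest y ψ)‖ * η y) ^ p)
      = ∫⁻ y, G y ^ p := by
    rw [ofReal_integral_eq_lintegral_ofReal hfin
      (Filter.Eventually.of_forall fun y => Real.rpow_nonneg (hbψ y) p)]
    exact lintegral_congr fun y => (hGp_eq y).symm
  -- translation machinery
  have mpL : ∀ x : EuclideanSpace ℝ (Fin n),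
      MeasurePreserving (fun y : EuclideanSpace ℝ (Fin n) => x - y) volume volume :=
    fun x => Measure.measurePreserving_sub_left volume x
  have mpR : ∀ y : EuclideanSpace ℝ (Fin n),
      MeasurePreserving (fun x : EuclideanSpace ℝ (Fin n) => x - y) volume volume :=
    fun y => measurePreserving_sub_right volume y
  have hshiftL : ∀ x : EuclideanSpace ℝ (Fin n), (∫⁻ y, g (x - y)) = ∫⁻ z, g z := fun x =>
    (mpL x).lintegral_comp_emb (MeasurableEquiv.subLeft x).measurableEmbedding g
  have hshiftR : ∀ y : EuclideanSpace ℝ (Fin n), (∫⁻ x, g (x - y)) = ∫⁻ z, g z := fun y =>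
    (mpR y).lintegral_comp_emb (MeasurableEquiv.subRight y).measurableEmbedding g
  -- algebraic identity in D
  have halg : ∀ x y : EuclideanSpace ℝ (Fin n),
      mulD (Ttest x χ) (mulD (Ttest y ψ) (Ttest y ψbar)) =
      mulD (Ttest y ψ) (Ttest y (mulD ψbar (Ttest (x - y) χ))) := by
    intro x y
    have hx : y + (x - y) = x := by abel
    rw [hTmul y ψbar (Ttest (x - y) χ), hTT y (x - y) χ, hx]
    rw [← hmulassoc, hmulcomm (Ttest x χ) (Ttest y ψ), hmulassoc,
      hmulcomm (Ttest x χ) (Ttest y ψbar)]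
  -- module estimate
  have hnorm : ∀ x y : EuclideanSpace ℝ (Fin n),
      ‖Λ (mulD (Ttest x χ) (mulD (Ttest y ψ) (Ttest y ψbar)))‖ ≤
      N (mulD ψbar (Ttest (x - y) χ)) * ‖Λ (Ttest y ψ)‖ := by
    intro x y
    rw [halg x y]
    calc ‖Λ (mulD (Ttest y ψ) (Ttest y (mulD ψbar (Ttest (x - y) χ))))‖
        ≤ N (Ttest y (mulD ψbar (Ttest (x - y) χ))) * ‖Λ (Ttest y ψ)‖ := hmod _ _
      _ = N (mulD ψbar (Ttest (x - y) χ)) * ‖Λ (Ttest y ψ)‖ := by rw [hNT]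
  -- weight estimate
  have hηb : ∀ x y : EuclideanSpace ℝ (Fin n),
      η x ≤ C₁ * η y * Real.exp (A (τ * ‖x - y‖)) := by
    intro x y
    have h := hη y (x - y)
    rwa [show y + (x - y) = x by abel] at h
  -- pointwise product estimate
  have hpt : ∀ x y : EuclideanSpace ℝ (Fin n),
      ‖Λ (mulD (Ttest x χ) (mulD (Ttest y ψ) (Ttest y ψbar)))‖ * η x ≤
      C₁ * ((N (mulD ψbar (Ttest (x - y) χ)) * Real.exp (A (τ * ‖x - y‖))) *
        (‖Λ (Ttest y ψ)‖ * η y)) := by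
    intro x y
    have h := mul_le_mul (hnorm x y) (hηb x y) (hηpos x).le
      (mul_nonneg (hN0 _) (norm_nonneg _))
    calc ‖Λ (mulD (Ttest x χ) (mulD (Ttest y ψ) (Ttest y ψbar)))‖ * η x
        ≤ N (mulD ψbar (Ttest (x - y) χ)) * ‖Λ (Ttest y ψ)‖ *
          (C₁ * η y * Real.exp (A (τ * ‖x - y‖))) := h
      _ = C₁ * ((N (mulD ψbar (Ttest (x - y) χ)) * Real.exp (A (τ * ‖x - y‖))) *
          (‖Λ (Ttest y ψ)‖ * η y)) := by ring
  -- Step 1 : pointwise ENNReal bound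
  have hstep1 : ∀ x : EuclideanSpace ℝ (Fin n), ENNReal.ofReal (l2 ^ 2) * F x ≤
      ENNReal.ofReal C₁ * ∫⁻ y, g (x - y) * G y := by
    intro x
    have hInteg : Integrable (fun y : EuclideanSpace ℝ (Fin n) =>
        ‖Λ (mulD (Ttest x χ) (mulD (Ttest y ψ) (Ttest y ψbar)))‖ * η x) :=
      ((hBoch x).norm).mul_const (η x)
    have e0 : l2 ^ 2 * ‖Λ (Ttest x χ)‖ ≤ ∫ y : EuclideanSpace ℝ (Fin n),
        ‖Λ (mulD (Ttest x χ) (mulD (Ttest y ψ) (Ttest y ψbar)))‖ := by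
      calc l2 ^ 2 * ‖Λ (Ttest x χ)‖ = ‖(l2 ^ 2 : ℝ) • Λ (Ttest x χ)‖ := by
            rw [norm_smul, Real.norm_of_nonneg (pow_nonneg hl2.le 2)]
        _ = ‖∫ y : EuclideanSpace ℝ (Fin n),
              Λ (mulD (Ttest x χ) (mulD (Ttest y ψ) (Ttest y ψbar)))‖ := by rw [hrepro x]
        _ ≤ _ := norm_integral_le_integral_norm _
    have e1 : l2 ^ 2 * (‖Λ (Ttest x χ)‖ * η x) ≤ ∫ y : EuclideanSpace ℝ (Fin n),
        ‖Λ (mulD (Ttest x χ) (mulD (Ttest y ψ) (Ttest y ψbar)))‖ * η x := by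
      calc l2 ^ 2 * (‖Λ (Ttest x χ)‖ * η x) = l2 ^ 2 * ‖Λ (Ttest x χ)‖ * η x := by ring
        _ ≤ (∫ y : EuclideanSpace ℝ (Fin n),
              ‖Λ (mulD (Ttest x χ) (mulD (Ttest y ψ) (Ttest y ψbar)))‖) * η x :=
            mul_le_mul_of_nonneg_right e0 (hηpos x).le
        _ = _ := (integral_mul_const _ _).symm
    have e2 : ENNReal.ofReal (l2 ^ 2 * (‖Λ (Ttest x χ)‖ * η x)) ≤
        ∫⁻ y, ENNReal.ofReal
          (‖Λ (mulD (Ttest x χ) (mulD (Ttest y ψ) (Ttest y ψbar)))‖ * η x) := by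
      rw [← ofReal_integral_eq_lintegral_ofReal hInteg
        (Filter.Eventually.of_forall fun y => mul_nonneg (norm_nonneg _) (hηpos x).le)]
      exact ENNReal.ofReal_le_ofReal e1
    have e3 : (∫⁻ y, ENNReal.ofReal
        (‖Λ (mulD (Ttest x χ) (mulD (Ttest y ψ) (Ttest y ψbar)))‖ * η x)) ≤
        ∫⁻ y, ENNReal.ofReal C₁ * (g (x - y) * G y) := by
      refine lintegral_mono fun y => ?_
      calc ENNReal.ofReal (‖Λ (mulD (Ttest x χ) (mulD (Ttest y ψ) (Ttest y ψbar)))‖ * η x)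
          ≤ ENNReal.ofReal (C₁ * ((N (mulD ψbar (Ttest (x - y) χ)) *
              Real.exp (A (τ * ‖x - y‖))) * (‖Λ (Ttest y ψ)‖ * η y))) :=
            ENNReal.ofReal_le_ofReal (hpt x y)
        _ = ENNReal.ofReal C₁ * (g (x - y) * G y) := by
            rw [ENNReal.ofReal_mul hC₁.le, ENNReal.ofReal_mul (hggnn _)]
    calc ENNReal.ofReal (l2 ^ 2) * F x
        = ENNReal.ofReal (l2 ^ 2 * (‖Λ (Ttest x χ)‖ * η x)) :=
          (ENNReal.ofReal_mul (pow_nonneg hl2.le 2)).symm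
      _ ≤ ∫⁻ y, ENNReal.ofReal C₁ * (g (x - y) * G y) := e2.trans e3
      _ = ENNReal.ofReal C₁ * ∫⁻ y, g (x - y) * G y :=
          lintegral_const_mul' _ _ ENNReal.ofReal_ne_top
  have hc2 : ENNReal.ofReal (l2 ^ 2) ≠ 0 := by
    simp only [ne_eq, ENNReal.ofReal_eq_zero, not_le]
    exact pow_pos hl2 2
  have hstep1' : ∀ x : EuclideanSpace ℝ (Fin n),
      F x ≤ (ENNReal.ofReal (l2 ^ 2))⁻¹ * ENNReal.ofReal C₁ * ∫⁻ y, g (x - y) * G y := by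
    intro x
    rw [mul_assoc]
    calc F x = (ENNReal.ofReal (l2 ^ 2))⁻¹ * (ENNReal.ofReal (l2 ^ 2) * F x) := by
          rw [← mul_assoc, ENNReal.inv_mul_cancel hc2 ENNReal.ofReal_ne_top, one_mul]
      _ ≤ _ := mul_le_mul_right (hstep1 x) _
  -- Step 2 : Hölder
  have hS : ∀ x : EuclideanSpace ℝ (Fin n), (∫⁻ y, g (x - y) * G y) ^ p ≤
      (∫⁻ z, g z) ^ (p - 1) * ∫⁻ y, g (x - y) * G y ^ p := by
    intro x
    have hgsh : AEMeasurable (fun y : EuclideanSpace ℝ (Fin n) => g (x - y)) volume :=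
      hg_m.comp_quasiMeasurePreserving (mpL x).quasiMeasurePreserving
    rcases eq_or_lt_of_le hp with hp1 | hp1
    · rw [← hp1]
      simp only [ENNReal.rpow_one, sub_self, ENNReal.rpow_zero, one_mul, le_refl]
    · set q : ℝ := p / (p - 1) with hqdef
      have hpq : p.HolderConjugate q := Real.HolderConjugate.conjExponent hp1
      have hq0 : q ≠ 0 := ne_of_gt hpq.symm.pos
      have id1 : ∀ y : EuclideanSpace ℝ (Fin n),
          g (x - y) * G y = g (x - y) ^ (1 / q) * (g (x - y) ^ (1 / p) * G y) := by
        intro y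
        rw [← mul_assoc, ← ENNReal.rpow_add_of_nonneg (1 / q) (1 / p)
          (le_of_lt (one_div_pos.2 hpq.symm.pos)) (le_of_lt (one_div_pos.2 hp0))]
        rw [show (1:ℝ) / q + 1 / p = 1 by
          rw [one_div, one_div]; rw [add_comm]; exact hpq.inv_add_inv_eq_one]
        rw [ENNReal.rpow_one]
      have id2 : ∀ y : EuclideanSpace ℝ (Fin n), (g (x - y) ^ (1 / q)) ^ q = g (x - y) := by
        intro y
        rw [one_div, ENNReal.rpow_inv_rpow hq0]
      have id3 : ∀ y : EuclideanSpace ℝ (Fin n),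
          (g (x - y) ^ (1 / p) * G y) ^ p = g (x - y) * G y ^ p := by
        intro y
        rw [ENNReal.mul_rpow_of_nonneg _ _ hp0.le, one_div, ENNReal.rpow_inv_rpow hp0']
      have key := ENNReal.lintegral_mul_le_Lp_mul_Lq volume hpq.symm
        (f := fun y : EuclideanSpace ℝ (Fin n) => g (x - y) ^ (1 / q))
        (g := fun y : EuclideanSpace ℝ (Fin n) => g (x - y) ^ (1 / p) * G y)
        (hgsh.pow aemeasurable_const) ((hgsh.pow aemeasurable_const).mul hG_m)
      have key' : (∫⁻ y, g (x - y) * G y) ≤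
          (∫⁻ y, g (x - y)) ^ (1 / q) * (∫⁻ y, g (x - y) * G y ^ p) ^ (1 / p) := by
        calc (∫⁻ y, g (x - y) * G y)
            = ∫⁻ y, g (x - y) ^ (1 / q) * (g (x - y) ^ (1 / p) * G y) :=
              lintegral_congr id1
          _ ≤ (∫⁻ y, (g (x - y) ^ (1 / q)) ^ q) ^ (1 / q) *
              (∫⁻ y, (g (x - y) ^ (1 / p) * G y) ^ p) ^ (1 / p) := key
          _ = (∫⁻ y, g (x - y)) ^ (1 / q) * (∫⁻ y, g (x - y) * G y ^ p) ^ (1 / p) := by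
              rw [lintegral_congr id2, lintegral_congr id3]
      have hq_exp : (1 / q) * p = p - 1 := by
        rw [hqdef, one_div, inv_div, div_mul_cancel₀ _ hp0']
      calc (∫⁻ y, g (x - y) * G y) ^ p
          ≤ ((∫⁻ y, g (x - y)) ^ (1 / q) * (∫⁻ y, g (x - y) * G y ^ p) ^ (1 / p)) ^ p :=
            ENNReal.rpow_le_rpow key' hp0.le
        _ = (∫⁻ z, g z) ^ (p - 1) * ∫⁻ y, g (x - y) * G y ^ p := by
            rw [ENNReal.mul_rpow_of_nonneg _ _ hp0.le, ← ENNReal.rpow_mul, hq_exp,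
              one_div, ENNReal.rpow_inv_rpow hp0', hshiftL x]
  -- Step 3 : Tonelli
  have hTswap : (∫⁻ x, ∫⁻ y, g (x - y) * G y ^ p) = (∫⁻ z, g z) * ∫⁻ y, G y ^ p := by
    have qmp : Measure.QuasiMeasurePreserving
        (fun z : EuclideanSpace ℝ (Fin n) × EuclideanSpace ℝ (Fin n) => z.1 - z.2)
        (volume.prod volume) volume :=
      (Measure.quasiMeasurePreserving_fst).comp
        (measurePreserving_sub_prod volume volume).quasiMeasurePreserving
    have h1 : AEMeasurable
        (fun z : EuclideanSpace ℝ (Fin n) × EuclideanSpace ℝ (Fin n) => g (z.1 - z.2))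
        (volume.prod volume) := hg_m.comp_quasiMeasurePreserving qmp
    have h2 : AEMeasurable
        (fun z : EuclideanSpace ℝ (Fin n) × EuclideanSpace ℝ (Fin n) => G z.2 ^ p)
        (volume.prod volume) :=
      hGp_m.comp_quasiMeasurePreserving Measure.quasiMeasurePreserving_snd
    have hprod : AEMeasurable
        (fun z : EuclideanSpace ℝ (Fin n) × EuclideanSpace ℝ (Fin n) =>
          g (z.1 - z.2) * G z.2 ^ p) (volume.prod volume) := h1.mul h2
    calc (∫⁻ x, ∫⁻ y, g (x - y) * G y ^ p)
        = ∫⁻ y, ∫⁻ x, g (x - y) * G y ^ p := lintegral_lintegral_swap hprod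
      _ = ∫⁻ y, (∫⁻ x, g (x - y)) * G y ^ p := by
          refine lintegral_congr fun y => ?_
          exact lintegral_mul_const'' _
            (hg_m.comp_quasiMeasurePreserving (mpR y).quasiMeasurePreserving)
      _ = ∫⁻ y, (∫⁻ z, g z) * G y ^ p := by
          refine lintegral_congr fun y => ?_
          rw [hshiftR y]
      _ = (∫⁻ z, g z) * ∫⁻ y, G y ^ p := lintegral_const_mul' _ _ hIg_ne
  -- collect constants
  have hKne : (ENNReal.ofReal (l2 ^ 2))⁻¹ * ENNReal.ofReal C₁ ≠ ⊤ :=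
    ENNReal.mul_ne_top (ENNReal.inv_ne_top.2 hc2) ENNReal.ofReal_ne_top
  have hKp_ne : ((ENNReal.ofReal (l2 ^ 2))⁻¹ * ENNReal.ofReal C₁) ^ p ≠ ⊤ :=
    ENNReal.rpow_ne_top_of_nonneg hp0.le hKne
  have hIgp1_ne : (∫⁻ z, g z) ^ (p - 1) ≠ ⊤ :=
    ENNReal.rpow_ne_top_of_nonneg (by linarith) hIg_ne
  have hcg : (∫⁻ z, g z) ^ (p - 1) * (∫⁻ z, g z) = (∫⁻ z, g z) ^ p := by
    calc (∫⁻ z, g z) ^ (p - 1) * (∫⁻ z, g z)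
        = (∫⁻ z, g z) ^ (p - 1) * (∫⁻ z, g z) ^ (1:ℝ) := by rw [ENNReal.rpow_one]
      _ = (∫⁻ z, g z) ^ (p - 1 + 1) :=
          (ENNReal.rpow_add_of_nonneg _ _ (by linarith) zero_le_one).symm
      _ = (∫⁻ z, g z) ^ p := by norm_num
  -- main lintegral estimate
  have hmain : (∫⁻ x, F x ^ p) ≤
      ((ENNReal.ofReal (l2 ^ 2))⁻¹ * ENNReal.ofReal C₁) ^ p * (∫⁻ z, g z) ^ p *
        ∫⁻ y, G y ^ p := by
    calc (∫⁻ x, F x ^ p)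
        ≤ ∫⁻ x, ((ENNReal.ofReal (l2 ^ 2))⁻¹ * ENNReal.ofReal C₁) ^ p *
            ((∫⁻ z, g z) ^ (p - 1) * ∫⁻ y, g (x - y) * G y ^ p) := by
          refine lintegral_mono fun x => ?_
          calc F x ^ p
              ≤ ((ENNReal.ofReal (l2 ^ 2))⁻¹ * ENNReal.ofReal C₁ *
                  ∫⁻ y, g (x - y) * G y) ^ p := ENNReal.rpow_le_rpow (hstep1' x) hp0.le
            _ = ((ENNReal.ofReal (l2 ^ 2))⁻¹ * ENNReal.ofReal C₁) ^ p *
                  (∫⁻ y, g (x - y) * G y) ^ p := ENNReal.mul_rpow_of_nonneg _ _ hp0.le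
            _ ≤ _ := mul_le_mul_right (hS x) _
      _ = ((ENNReal.ofReal (l2 ^ 2))⁻¹ * ENNReal.ofReal C₁) ^ p *
            ((∫⁻ z, g z) ^ (p - 1) * ∫⁻ x, ∫⁻ y, g (x - y) * G y ^ p) := by
          rw [lintegral_const_mul' _ _ hKp_ne, lintegral_const_mul' _ _ hIgp1_ne]
      _ = ((ENNReal.ofReal (l2 ^ 2))⁻¹ * ENNReal.ofReal C₁) ^ p * (∫⁻ z, g z) ^ p *
            ∫⁻ y, G y ^ p := by
          rw [hTswap, ← hcg]; ring
  -- take (1/p)-th powers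
  have hfinal : (∫⁻ x, F x ^ p) ^ (1 / p) ≤
      (ENNReal.ofReal (l2 ^ 2))⁻¹ * ENNReal.ofReal C₁ * (∫⁻ z, g z) *
        (∫⁻ y, G y ^ p) ^ (1 / p) := by
    have h := ENNReal.rpow_le_rpow hmain (le_of_lt (by positivity : (0:ℝ) < 1 / p))
    calc (∫⁻ x, F x ^ p) ^ (1 / p) ≤
        (((ENNReal.ofReal (l2 ^ 2))⁻¹ * ENNReal.ofReal C₁) ^ p * (∫⁻ z, g z) ^ p *
          ∫⁻ y, G y ^ p) ^ (1 / p) := h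
      _ = (ENNReal.ofReal (l2 ^ 2))⁻¹ * ENNReal.ofReal C₁ * (∫⁻ z, g z) *
          (∫⁻ y, G y ^ p) ^ (1 / p) := by
        rw [ENNReal.mul_rpow_of_nonneg _ _ (by positivity : (0:ℝ) ≤ 1 / p),
          ENNReal.mul_rpow_of_nonneg _ _ (by positivity : (0:ℝ) ≤ 1 / p),
          one_div, ENNReal.rpow_rpow_inv hp0', ENNReal.rpow_rpow_inv hp0', ← one_div]
  -- back to real numbers
  have hXnn : 0 ≤ ∫ x : EuclideanSpace ℝ (Fin n), (‖Λ (Ttest x χ)‖ * η x) ^ p :=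
    integral_nonneg fun x => Real.rpow_nonneg (hbχ x) p
  refine (ENNReal.ofReal_le_ofReal_iff hRHSnn).1 ?_
  have hXeq : ENNReal.ofReal
      ((∫ x : EuclideanSpace ℝ (Fin n), (‖Λ (Ttest x χ)‖ * η x) ^ p) ^ (1 / p)) =
      (∫⁻ x, F x ^ p) ^ (1 / p) := by
    rw [← ENNReal.ofReal_rpow_of_nonneg hXnn (by positivity : (0:ℝ) ≤ 1 / p)]
    congr 1
    rw [ofReal_integral_eq_lintegral_ofReal hInt
      (Filter.Eventually.of_forall fun x => Real.rpow_nonneg (hbχ x) p)]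
    exact lintegral_congr fun x => (ENNReal.ofReal_rpow_of_nonneg (hbχ x) hp0.le).symm
  have hRHSeq : ENNReal.ofReal ((l2 ^ 2)⁻¹ * C₁ *
      (∫ y : EuclideanSpace ℝ (Fin n), N (mulD ψbar (Ttest y χ)) * Real.exp (A (τ * ‖y‖))) *
      (∫ y : EuclideanSpace ℝ (Fin n), (‖Λ (Ttest y ψ)‖ * η y) ^ p) ^ (1 / p)) =
      (ENNReal.ofReal (l2 ^ 2))⁻¹ * ENNReal.ofReal C₁ * (∫⁻ z, g z) *
        (∫⁻ y, G y ^ p) ^ (1 / p) := by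
    rw [ENNReal.ofReal_mul (mul_nonneg (mul_nonneg hinv_nn hC₁.le) hZnn),
      ENNReal.ofReal_mul (mul_nonneg hinv_nn hC₁.le),
      ENNReal.ofReal_mul hinv_nn,
      ENNReal.ofReal_inv_of_pos (pow_pos hl2 2),
      hIg_eq, ← ENNReal.ofReal_rpow_of_nonneg hYnn (by positivity : (0:ℝ) ≤ 1 / p), hIG_eq]
  rw [hXeq, hRHSeq]
  exact hfinal
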